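/- Let t ∈ ℝ and v ∈ ℝ³, and define the linear map p_{t,v} on ℝ⁵ = ℝ × ℝ³ × ℝ by p_{t,v}(x₀, x, x₄) = (x₀ + t·b(v,x) − (t²·q(v)/2)·x₄, x − t·x₄·v, x₄). Then: (a) p_{t,v} preserves the quadratic form Q(x₀, x, x₄) = 2x₀x₄ + q(x) on ℝ⁵, i.e. Q(p_{t,v}(ξ)) = Q(ξ) for all ξ ∈ ℝ⁵; (b) for every x ∈ ℝ³, setting j(x) = (1, x, −q(x)/2) ∈ ℝ⁵ and D = 1 + t·b(x,v) + (t²/4)·q(v)·q(x), one has q(x + (t·q(x)/2)·v) = D·q(x), and if D ≠ 0 then p_{t,v}(j(x)) = D · j(D⁻¹·(x + (t·q(x)/2)·v)). -/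

import Mathlib

noncomputable section

/-- The Lorentzian quadratic form `q(x) = 2x₁x₃ + x₂²` on `ℝ³`. -/
def qF (x : Fin 3 → ℝ) : ℝ := 2 * x 0 * x 2 + (x 1) ^ 2

/-- The polar bilinear form `b(x,v) = x₁v₃ + x₂v₂ + x₃v₁` of `qF`. -/
def bF (x v : Fin 3 → ℝ) : ℝ := x 0 * v 2 + x 1 * v 1 + x 2 * v 0

/-- The quadratic form `Q(x₀,x,x₄) = 2x₀x₄ + q(x)` on `ℝ⁵ = ℝ × ℝ³ × ℝ`. -/
def Q5 (ξ : ℝ × (Fin 3 → ℝ) × ℝ) : ℝ := 2 * ξ.1 * ξ.2.2 + qF ξ.2.1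

/-- The linear map `p_{t,v}` on `ℝ⁵ = ℝ × ℝ³ × ℝ`. -/
def pMap (t : ℝ) (v : Fin 3 → ℝ) (ξ : ℝ × (Fin 3 → ℝ) × ℝ) : ℝ × (Fin 3 → ℝ) × ℝ :=
  (ξ.1 + t * bF v ξ.2.1 - t ^ 2 * qF v / 2 * ξ.2.2, ξ.2.1 - (t * ξ.2.2) • v, ξ.2.2)

/-- The conformal embedding `j(x) = (1, x, -q(x)/2)` of Minkowski space in `ℝ⁵`. -/
def jF (x : Fin 3 → ℝ) : ℝ × (Fin 3 → ℝ) × ℝ := (1, x, -qF x / 2)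

theorem stmt0 (t : ℝ) (v : Fin 3 → ℝ) :
    (∀ ξ : ℝ × (Fin 3 → ℝ) × ℝ, Q5 (pMap t v ξ) = Q5 ξ) ∧
    (∀ x : Fin 3 → ℝ,
      qF (x + (t * qF x / 2) • v)
        = (1 + t * bF x v + t ^ 2 / 4 * qF v * qF x) * qF x ∧
      ((1 + t * bF x v + t ^ 2 / 4 * qF v * qF x) ≠ 0 →
        pMap t v (jF x)
          = (1 + t * bF x v + t ^ 2 / 4 * qF v * qF x) •
              jF ((1 + t * bF x v + t ^ 2 / 4 * qF v * qF x)⁻¹ •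
                (x + (t * qF x / 2) • v)))) := by
  constructor
  · intro ξ
    simp only [Q5, pMap, qF, bF, Pi.sub_apply, Pi.smul_apply, smul_eq_mul]
    ring
  · intro x
    set D := 1 + t * bF x v + t ^ 2 / 4 * qF v * qF x with hD
    have h1 : qF (x + (t * qF x / 2) • v) = D * qF x := by
      simp only [hD, qF, bF, Pi.add_apply, Pi.smul_apply, smul_eq_mul]
      ring
    refine ⟨h1, fun hDne => ?_⟩
    have h2 : qF (D⁻¹ • (x + (t * qF x / 2) • v)) = D⁻¹ ^ 2 * (D * qF x) := by
      rw [← h1]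
      simp only [qF, Pi.smul_apply, smul_eq_mul]
      ring
    simp only [pMap, jF, Prod.smul_mk, smul_eq_mul, Prod.mk.injEq]
    refine ⟨?_, ?_, ?_⟩
    · field_simp
      simp only [hD, qF, bF]; ring
    · funext i
      simp only [Pi.sub_apply, Pi.smul_apply, Pi.add_apply, smul_eq_mul]
      field_simp
      ring
    · rw [h2]
      field_simp
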